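/- Let A and B be positive definite Hermitian n×n matrices. Then tr(A⁻¹B) ≤ n · (det B / det A) · (tr(B⁻¹A))^(n-1). -/

import Mathlib

open Matrix Finset

private lemma scalar_ineq {n : ℕ} (lam : Fin n → ℝ) (hpos : ∀ i, 0 < lam i) :
    ∑ i, lam i ≤ n * (∏ i, lam i) * (∑ i, (lam i)⁻¹) ^ (n - 1) := by
  have key : ∀ i : Fin n, lam i ≤ (∏ j, lam j) * (∑ j, (lam j)⁻¹) ^ (n - 1) := by
    intro i
    have h1 : lam i * ∏ j ∈ univ.erase i, lam j = ∏ j, lam j :=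
      Finset.mul_prod_erase _ _ (mem_univ i)
    have h2 : (∏ j ∈ univ.erase i, (lam j)⁻¹) ≤ (∑ j, (lam j)⁻¹) ^ (n - 1) := by
      calc (∏ j ∈ univ.erase i, (lam j)⁻¹)
          ≤ ∏ _j ∈ univ.erase i, (∑ j, (lam j)⁻¹) :=
            Finset.prod_le_prod (fun j _ => inv_nonneg.mpr (hpos j).le)
              (fun j _ => Finset.single_le_sum (f := fun k => (lam k)⁻¹)
                (fun k _ => inv_nonneg.mpr (hpos k).le) (mem_univ j))
        _ = (∑ j, (lam j)⁻¹) ^ (n - 1) := by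
            rw [Finset.prod_const, Finset.card_erase_of_mem (mem_univ i),
              Finset.card_univ, Fintype.card_fin]
    have h3 : lam i = (∏ j, lam j) * ∏ j ∈ univ.erase i, (lam j)⁻¹ := by
      rw [← h1, mul_assoc, ← Finset.prod_mul_distrib]
      have : ∀ j ∈ univ.erase i, lam j * (lam j)⁻¹ = 1 := fun j _ =>
        mul_inv_cancel₀ (hpos j).ne'
      rw [Finset.prod_congr rfl this, Finset.prod_const_one, mul_one]
    rw [h3]
    exact mul_le_mul_of_nonneg_left h2 (le_of_lt (Finset.prod_pos fun j _ => hpos j))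
  calc ∑ i, lam i ≤ ∑ _i : Fin n, (∏ j, lam j) * (∑ j, (lam j)⁻¹) ^ (n - 1) :=
        Finset.sum_le_sum fun i _ => key i
    _ = n * (∏ j, lam j) * (∑ j, (lam j)⁻¹) ^ (n - 1) := by
        rw [Finset.sum_const, Finset.card_univ, Fintype.card_fin, nsmul_eq_mul, mul_assoc]

private lemma key_one {n : ℕ} (C : Matrix (Fin n) (Fin n) ℝ) (hC : C.PosDef) :
    C.trace ≤ n * C.det * (C⁻¹.trace) ^ (n - 1) := by
  have hUmem := hC.1.eigenvectorUnitary.2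
  set U : Matrix (Fin n) (Fin n) ℝ := (hC.1.eigenvectorUnitary : Matrix (Fin n) (Fin n) ℝ) with hUdef
  have hU : U * star U = 1 := (Matrix.mem_unitaryGroup_iff).mp hUmem
  have hU' : star U * U = 1 := (Matrix.mem_unitaryGroup_iff').mp hUmem
  have hspec : C = U * diagonal (RCLike.ofReal ∘ hC.1.eigenvalues) * star U :=
    hC.1.spectral_theorem
  have hDpos := hC.eigenvalues_pos
  have hDcoe : diagonal (RCLike.ofReal ∘ hC.1.eigenvalues : Fin n → ℝ) =
      diagonal hC.1.eigenvalues := by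
    congr 1
  rw [hDcoe] at hspec
  have hDinv : diagonal hC.1.eigenvalues * diagonal (fun i => (hC.1.eigenvalues i)⁻¹)
      = 1 := by
    rw [diagonal_mul_diagonal]
    have : (fun i => hC.1.eigenvalues i * (hC.1.eigenvalues i)⁻¹) = fun _ => (1 : ℝ) :=
      funext fun i => mul_inv_cancel₀ (hDpos i).ne'
    rw [this, diagonal_one]
  have hMinv : C⁻¹ = U * diagonal (fun i => (hC.1.eigenvalues i)⁻¹) * star U := by
    apply inv_eq_right_inv
    calc C * (U * diagonal (fun i => (hC.1.eigenvalues i)⁻¹) * star U)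
        = U * diagonal hC.1.eigenvalues * star U *
            (U * diagonal (fun i => (hC.1.eigenvalues i)⁻¹) * star U) := by rw [← hspec]
      _ = U * diagonal hC.1.eigenvalues * (star U * U) *
            diagonal (fun i => (hC.1.eigenvalues i)⁻¹) * star U := by
          simp only [Matrix.mul_assoc]
      _ = U * (diagonal hC.1.eigenvalues * diagonal (fun i => (hC.1.eigenvalues i)⁻¹)) *
            star U := by rw [hU']; simp only [Matrix.mul_assoc, Matrix.mul_one]
      _ = 1 := by rw [hDinv, Matrix.mul_one, hU]
  have htr : C.trace = ∑ i, hC.1.eigenvalues i := by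
    calc C.trace = (U * diagonal hC.1.eigenvalues * star U).trace := by rw [← hspec]
      _ = ∑ i, hC.1.eigenvalues i := by
          rw [Matrix.trace_mul_cycle, hU', Matrix.one_mul, trace_diagonal]
  have htrinv : C⁻¹.trace = ∑ i, (hC.1.eigenvalues i)⁻¹ := by
    rw [hMinv, Matrix.trace_mul_cycle, hU', Matrix.one_mul, trace_diagonal]
  have hdet : C.det = ∏ i, hC.1.eigenvalues i := by
    simpa using hC.1.det_eq_prod_eigenvalues
  rw [htr, htrinv, hdet]
  exact scalar_ineq _ hDpos

open scoped MatrixOrder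

/-- For positive definite symmetric matrices A, B:
tr(A⁻¹B) ≤ n · (det B / det A) · (tr(B⁻¹A))^(n-1). -/
theorem stmt_7 (n : ℕ) (A B : Matrix (Fin n) (Fin n) ℝ)
    (hA : A.PosDef) (hB : B.PosDef) :
    (A⁻¹ * B).trace ≤ n * (B.det / A.det) * ((B⁻¹ * A).trace) ^ (n - 1) := by
  set S := CFC.sqrt A with hS
  have hSpsd : S.PosSemidef := (CFC.sqrt_nonneg A).posSemidef
  have hSS : S * S = A := CFC.sqrt_mul_sqrt_self A hA.posSemidef.nonneg
  have hdetA : A.det = S.det * S.det := by rw [← det_mul, hSS]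
  have hdetS : S.det ≠ 0 := by
    intro h
    apply hA.det_pos.ne'
    rw [hdetA, h, mul_zero]
  have hSunit : IsUnit S.det := isUnit_iff_ne_zero.mpr hdetS
  have hSinv : S⁻¹ * S = 1 := nonsing_inv_mul S hSunit
  have hSinv' : S * S⁻¹ = 1 := mul_nonsing_inv S hSunit
  have hBunit : IsUnit B.det := isUnit_iff_ne_zero.mpr hB.det_pos.ne'
  have hBinv : B * B⁻¹ = 1 := mul_nonsing_inv B hBunit
  set C := S⁻¹ * B * S⁻¹ with hCdef
  have hSinvH : S⁻¹ᴴ = S⁻¹ := by rw [conjTranspose_nonsing_inv, hSpsd.1]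
  have hC : C.PosDef := by
    refine Matrix.PosDef.of_dotProduct_mulVec_pos ?_ ?_
    · show Cᴴ = C
      rw [hCdef, Matrix.conjTranspose_mul, Matrix.conjTranspose_mul, hSinvH, hB.1.eq,
        Matrix.mul_assoc]
    · intro x hx
      have hy : S⁻¹ *ᵥ x ≠ 0 := by
        intro h
        apply hx
        have : S *ᵥ (S⁻¹ *ᵥ x) = x := by
          rw [Matrix.mulVec_mulVec, hSinv', Matrix.one_mulVec]
        rw [h, Matrix.mulVec_zero] at this
        exact this.symm
      have := hB.dotProduct_mulVec_pos hy
      have heq : star x ⬝ᵥ C *ᵥ x = star (S⁻¹ *ᵥ x) ⬝ᵥ B *ᵥ (S⁻¹ *ᵥ x) := by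
        rw [hCdef, ← Matrix.mulVec_mulVec, ← Matrix.mulVec_mulVec]
        rw [Matrix.star_mulVec, hSinvH]
        rw [Matrix.dotProduct_mulVec (star x)]
      rw [heq]
      exact this
  have hAinv : A⁻¹ = S⁻¹ * S⁻¹ := by
    apply inv_eq_right_inv
    calc A * (S⁻¹ * S⁻¹) = S * (S * S⁻¹) * S⁻¹ := by rw [← hSS]; simp only [Matrix.mul_assoc]
      _ = 1 := by rw [hSinv', Matrix.mul_one, hSinv']
  have htr1 : (A⁻¹ * B).trace = C.trace := by
    rw [hAinv, hCdef, Matrix.mul_assoc, Matrix.trace_mul_comm, Matrix.mul_assoc]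
  have hCinv : C⁻¹ = S * B⁻¹ * S := by
    apply inv_eq_right_inv
    calc C * (S * B⁻¹ * S)
        = S⁻¹ * B * (S⁻¹ * S) * B⁻¹ * S := by rw [hCdef]; simp only [Matrix.mul_assoc]
      _ = S⁻¹ * (B * B⁻¹) * S := by rw [hSinv]; simp only [Matrix.mul_assoc, Matrix.mul_one]
      _ = 1 := by rw [hBinv, Matrix.mul_one, hSinv]
  have htr2 : (B⁻¹ * A).trace = C⁻¹.trace := by
    rw [hCinv, ← hSS, ← Matrix.mul_assoc, Matrix.trace_mul_cycle]
  have hdetC : C.det = B.det / A.det := by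
    rw [hCdef, det_mul, det_mul, det_nonsing_inv, hdetA]
    rw [Ring.inverse_eq_inv']
    field_simp
  calc (A⁻¹ * B).trace = C.trace := htr1
    _ ≤ n * C.det * (C⁻¹.trace) ^ (n - 1) := key_one C hC
    _ = n * (B.det / A.det) * ((B⁻¹ * A).trace) ^ (n - 1) := by rw [hdetC, htr2]
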